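/- For every defeasible knowledge base K and every ALC concept C: rank_K(C) = ∞ if and only if K modularly entails C ⊑ ⊥ (i.e. C^R = ∅ in every modular model R of K). -/
import Mathlib


namespace DefeasibleDL

/-- ALC concepts over concept names `C` and role names `R`. -/
inductive Concept (C R : Type) : Type where
  | top : Concept C R
  | bot : Concept C R
  | atom : C → Concept C R
  | neg : Concept C R → Concept C R
  | conj : Concept C R → Concept C R → Concept C R
  | disj : Concept C R → Concept C R → Concept C R
  | ex : R → Concept C R → Concept C R
  | all : R → Concept C R → Concept C R

/-- A classical interpretation with domain `D`. -/
structure ClassInterp (C R D : Type) where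
  interpC : C → Set D
  interpR : R → D → D → Prop

/-- Extension of a concept in a classical interpretation. -/
def ClassInterp.eval {C R D : Type} (I : ClassInterp C R D) : Concept C R → Set D
  | .top => Set.univ
  | .bot => ∅
  | .atom a => I.interpC a
  | .neg c => (I.eval c)ᶜ
  | .conj c d => I.eval c ∩ I.eval d
  | .disj c d => I.eval c ∪ I.eval d
  | .ex r c => {x | ∃ y, I.interpR r x y ∧ y ∈ I.eval c}
  | .all r c => {x | ∀ y, I.interpR r x y → y ∈ I.eval c}

/-- The `pref`-minimal elements of a set `S`. -/
def minSet {D : Type} (pref : D → D → Prop) (S : Set D) : Set D :=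
  {x | x ∈ S ∧ ∀ y ∈ S, ¬ pref y x}

/-- A preferential interpretation: a classical interpretation together with a smooth
strict partial order on the domain. -/
structure PrefInterp (C R D : Type) extends ClassInterp C R D where
  pref : D → D → Prop
  pref_irrefl : ∀ x, ¬ pref x x
  pref_trans : ∀ x y z, pref x y → pref y z → pref x z
  smooth : ∀ c : Concept C R, (toClassInterp.eval c).Nonempty →
      (minSet pref (toClassInterp.eval c)).Nonempty

/-- Satisfaction of a general concept inclusion `c ⊑ d`. -/
def PrefInterp.satGCI {C R D : Type} (P : PrefInterp C R D) (c d : Concept C R) : Prop :=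
  P.toClassInterp.eval c ⊆ P.toClassInterp.eval d

/-- Satisfaction of a defeasible concept inclusion `c ⊏∼ d`. -/
def PrefInterp.satDCI {C R D : Type} (P : PrefInterp C R D) (c d : Concept C R) : Prop :=
  minSet P.pref (P.toClassInterp.eval c) ⊆ P.toClassInterp.eval d

/-- A strict partial order is modular if its incomparability relation is transitive. -/
def Modular {D : Type} (pref : D → D → Prop) : Prop :=
  ∀ x y z : D, (¬ pref x y ∧ ¬ pref y x) → (¬ pref y z ∧ ¬ pref z y) →
    (¬ pref x z ∧ ¬ pref z x)

/-- Convexity of a height function: every value below an attained value is attained. -/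
def Convex {D : Type} (h : D → ℕ) : Prop :=
  ∀ (x : D) (j : ℕ), j < h x → ∃ y : D, h y = j

/-- `pref` is ranked by the convex height function `h`. -/
def RankedBy {D : Type} (pref : D → D → Prop) (h : D → ℕ) : Prop :=
  Convex h ∧ ∀ x y : D, pref x y ↔ h x < h y

/-- `pref` is a ranked order. -/
def IsRanked {D : Type} (pref : D → D → Prop) : Prop :=
  ∃ h : D → ℕ, RankedBy pref h

/-- Statements: general or defeasible concept inclusions. -/
inductive Stmt (C R : Type) : Type where
  | gci : Concept C R → Concept C R → Stmt C R
  | dci : Concept C R → Concept C R → Stmt C R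

def PrefInterp.satStmt {C R D : Type} (P : PrefInterp C R D) : Stmt C R → Prop
  | .gci c d => P.satGCI c d
  | .dci c d => P.satDCI c d

/-- A defeasible knowledge base: a finite TBox and a finite DTBox
(both represented as sets of pairs of concepts). -/
structure KB (C R : Type) where
  tbox : Set (Concept C R × Concept C R)
  dbox : Set (Concept C R × Concept C R)
  tbox_finite : tbox.Finite
  dbox_finite : dbox.Finite

/-- The statements of a knowledge base. -/
def KB.stmts {C R : Type} (K : KB C R) : Set (Stmt C R) :=
  {s | (∃ p ∈ K.tbox, s = Stmt.gci p.1 p.2) ∨ (∃ p ∈ K.dbox, s = Stmt.dci p.1 p.2)}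

/-- A preferential model of a knowledge base. -/
def PrefInterp.isModel {C R D : Type} (P : PrefInterp C R D) (K : KB C R) : Prop :=
  (∀ p ∈ K.tbox, P.satGCI p.1 p.2) ∧ (∀ p ∈ K.dbox, P.satDCI p.1 p.2)

/-- Preferential entailment. -/
def prefEntails {C R : Type} (K : KB C R) (s : Stmt C R) : Prop :=
  ∀ (D : Type) (_ : Nonempty D) (P : PrefInterp C R D), P.isModel K → P.satStmt s

/-- Modular entailment. -/
def modEntails {C R : Type} (K : KB C R) (s : Stmt C R) : Prop :=
  ∀ (D : Type) (_ : Nonempty D) (P : PrefInterp C R D),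
    Modular P.pref → P.isModel K → P.satStmt s

/-- Modular entailment from a TBox `T` and a DTBox `Ds` (given as sets of pairs). -/
def modEntailsFrom {C R : Type} (T Ds : Set (Concept C R × Concept C R))
    (s : Stmt C R) : Prop :=
  ∀ (D : Type) (_ : Nonempty D) (P : PrefInterp C R D), Modular P.pref →
    (∀ p ∈ T, P.satGCI p.1 p.2) → (∀ p ∈ Ds, P.satDCI p.1 p.2) → P.satStmt s

/-- A concept `c` is exceptional w.r.t. `T ∪ Ds` if `T ∪ Ds ⊨_mod ⊤ ⊏∼ ¬c`. -/
def ExceptionalSem {C R : Type} (T Ds : Set (Concept C R × Concept C R))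
    (c : Concept C R) : Prop :=
  modEntailsFrom T Ds (Stmt.dci Concept.top (Concept.neg c))

/-- The iterated exceptionality sequence: `E 0 = Ds` and `E (n+1)` is the set of
DCIs of `E n` whose left-hand side is exceptional w.r.t. `T ∪ E n`
(so that `E i` is the DTBox of the knowledge base `K^i` of the ranking
construction, and `D^r_i = E i \ E (i+1)`). -/
def EseqSem {C R : Type} (T Ds : Set (Concept C R × Concept C R)) :
    ℕ → Set (Concept C R × Concept C R)
  | 0 => Ds
  | n + 1 => {p | p ∈ EseqSem T Ds n ∧ ExceptionalSem T (EseqSem T Ds n) p.1}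


section AuxProof

variable {C R : Type}

/-- Preferential interpretation induced by a height function into `ℕ`. -/
def heightInterp {D : Type} (I : ClassInterp C R D) (g : D → ℕ) : PrefInterp C R D where
  toClassInterp := I
  pref y z := g y < g z
  pref_irrefl x := lt_irrefl _
  pref_trans _ _ _ h1 h2 := lt_trans h1 h2
  smooth c hne := by
    have h : (g '' I.eval c).Nonempty := hne.image g
    obtain ⟨y, hy, hgy⟩ := Nat.sInf_mem h
    refine ⟨y, hy, fun z hz hlt => ?_⟩
    have h2 : sInf (g '' I.eval c) ≤ g z := Nat.sInf_le (Set.mem_image_of_mem g hz)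
    have hlt' : g z < g y := hlt
    omega

lemma heightInterp_modular {D : Type} (I : ClassInterp C R D) (g : D → ℕ) :
    Modular (heightInterp I g).pref := by
  rintro x y z ⟨a, b⟩ ⟨c, d⟩
  have a' : ¬ g x < g y := a
  have b' : ¬ g y < g x := b
  have c' : ¬ g y < g z := c
  have d' : ¬ g z < g y := d
  exact ⟨fun h => absurd (show g x < g z from h) (by omega),
    fun h => absurd (show g z < g x from h) (by omega)⟩

/-- The normalized height of an element: the number of DCIs in `Ds` whose
left-hand side has its minimal elements strictly below `y`. -/
noncomputable def normHeight {D : Type} (P : PrefInterp C R D)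
    (Ds : Set (Concept C R × Concept C R)) (y : D) : ℕ :=
  {p | p ∈ Ds ∧ ∃ z ∈ minSet P.pref (P.toClassInterp.eval p.1), P.pref z y}.ncard

lemma norm_heights {D : Type} (Ds : Set (Concept C R × Concept C R)) (hDs : Ds.Finite)
    (P : PrefInterp C R D) (hm : Modular P.pref)
    (hD : ∀ p ∈ Ds, P.satDCI p.1 p.2) :
    ∃ g : D → ℕ, (∀ y, g y ≤ Ds.ncard) ∧ (∀ x ∈ minSet P.pref Set.univ, g x = 0) ∧
      (∀ p ∈ Ds, (heightInterp P.toClassInterp g).satDCI p.1 p.2) := by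
  classical
  refine ⟨normHeight P Ds, ?_, ?_, ?_⟩
  · intro y
    exact Set.ncard_le_ncard (fun p hp => hp.1) hDs
  · intro x hx
    have hempty : {p | p ∈ Ds ∧ ∃ z ∈ minSet P.pref (P.toClassInterp.eval p.1), P.pref z x}
        = (∅ : Set (Concept C R × Concept C R)) := by
      ext p
      simp only [Set.mem_setOf_eq, Set.mem_empty_iff_false, iff_false, not_and]
      rintro hp ⟨z, hz, hzx⟩
      exact hx.2 z (Set.mem_univ z) hzx
    show ({p | p ∈ Ds ∧ ∃ z ∈ minSet P.pref (P.toClassInterp.eval p.1), P.pref z x}).ncard = 0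
    rw [hempty, Set.ncard_empty]
  · rintro ⟨l, r⟩ hlr y hy
    obtain ⟨hyl, hymin⟩ := hy
    by_contra hyr
    obtain ⟨w, hwl, hwminl⟩ := P.smooth l ⟨y, hyl⟩
    have hwr : w ∈ P.toClassInterp.eval r := hD ⟨l, r⟩ hlr ⟨hwl, hwminl⟩
    have hynotmin : ∃ u ∈ P.toClassInterp.eval l, P.pref u y := by
      by_contra h
      push_neg at h
      exact hyr (hD ⟨l, r⟩ hlr ⟨hyl, h⟩)
    obtain ⟨u, hul, huy⟩ := hynotmin
    have hwy : P.pref w y := by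
      by_contra hwy
      have hyw : ¬ P.pref y w := hwminl y hyl
      have huw : ¬ P.pref u w := hwminl u hul
      have hwu : ¬ P.pref w u := fun h => hwy (P.pref_trans _ _ _ h huy)
      exact (hm y w u ⟨hyw, hwy⟩ ⟨hwu, huw⟩).2 huy
    have hsubset : {p | p ∈ Ds ∧ ∃ z ∈ minSet P.pref (P.toClassInterp.eval p.1), P.pref z w}
        ⊆ {p | p ∈ Ds ∧ ∃ z ∈ minSet P.pref (P.toClassInterp.eval p.1), P.pref z y} := by
      rintro p ⟨hp, z, hz, hzw⟩
      exact ⟨hp, z, hz, P.pref_trans _ _ _ hzw hwy⟩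
    have hne : {p | p ∈ Ds ∧ ∃ z ∈ minSet P.pref (P.toClassInterp.eval p.1), P.pref z w}
        ≠ {p | p ∈ Ds ∧ ∃ z ∈ minSet P.pref (P.toClassInterp.eval p.1), P.pref z y} := by
      intro he
      have h1 : (⟨l, r⟩ : Concept C R × Concept C R)
          ∈ {p | p ∈ Ds ∧ ∃ z ∈ minSet P.pref (P.toClassInterp.eval p.1), P.pref z y} :=
        ⟨hlr, w, ⟨hwl, hwminl⟩, hwy⟩
      rw [← he] at h1
      obtain ⟨-, z, ⟨hzl, -⟩, hzw⟩ := h1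
      exact hwminl z hzl hzw
    have hlt := Set.ncard_lt_ncard (hsubset.ssubset_of_ne hne)
      (hDs.subset (fun p hp => hp.1))
    exact hymin w hwl hlt

end AuxProof


section AuxProof2

variable {C R : Type}

lemma main_empty {D : Type} (ne : Nonempty D)
    (T Ds : Set (Concept C R × Concept C R)) (hDs : Ds.Finite)
    (hfix : ∀ p ∈ Ds, ExceptionalSem T Ds p.1)
    (c : Concept C R) (hc : ExceptionalSem T Ds c)
    (P : PrefInterp C R D) (hm : Modular P.pref)
    (hT : ∀ p ∈ T, P.satGCI p.1 p.2) (hD : ∀ p ∈ Ds, P.satDCI p.1 p.2) :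
    P.toClassInterp.eval c = ∅ := by
  obtain ⟨g, hgb, -, hgD⟩ := norm_heights Ds hDs P hm hD
  have hmodel : ∀ k : ℕ, (∀ p ∈ Ds, ∀ y ∈ P.toClassInterp.eval p.1, k ≤ g y) →
      (∀ p ∈ Ds, (heightInterp P.toClassInterp (fun y => g y - k)).satDCI p.1 p.2) := by
    intro k hk p hp y hy
    obtain ⟨hyl, hymin⟩ := hy
    refine hgD p hp ⟨hyl, fun z hz hlt => ?_⟩
    have h1 := hk p hp y hyl
    have h2 := hk p hp z hz
    have hlt' : g z < g y := hlt
    have h3 : g z - k < g y - k := by omega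
    exact hymin z hz h3
  have step : ∀ (k : ℕ) (d : Concept C R), ExceptionalSem T Ds d →
      (∀ p ∈ Ds, ∀ y ∈ P.toClassInterp.eval p.1, k ≤ g y) →
      (∀ y ∈ P.toClassInterp.eval d, k ≤ g y) →
      ∀ y ∈ P.toClassInterp.eval d, k + 1 ≤ g y := by
    intro k d hexc hkDs hkd y hy
    have hQ := hexc D ne (heightInterp P.toClassInterp (fun y => g y - k))
      (heightInterp_modular _ _) (fun p hp => hT p hp) (hmodel k hkDs)
    by_contra hlt
    have hk : g y = k := le_antisymm (by omega) (hkd y hy)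
    have hmem : y ∈ minSet (heightInterp P.toClassInterp (fun y => g y - k)).pref
        (P.toClassInterp.eval Concept.top) := by
      refine ⟨Set.mem_univ y, fun z hz h => ?_⟩
      have h' : g z - k < g y - k := h
      omega
    exact (hQ hmem) hy
  have key : ∀ k : ℕ, (∀ p ∈ Ds, ∀ y ∈ P.toClassInterp.eval p.1, k ≤ g y) ∧
      (∀ y ∈ P.toClassInterp.eval c, k ≤ g y) := by
    intro k
    induction k with
    | zero => exact ⟨fun _ _ _ _ => Nat.zero_le _, fun _ _ => Nat.zero_le _⟩
    | succ k ih =>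
      exact ⟨fun p hp => step k p.1 (hfix p hp) ih.1 (ih.1 p hp), step k c hc ih.1 ih.2⟩
  ext y
  simp only [Set.mem_empty_iff_false, iff_false]
  intro hy
  have h1 := (key (Ds.ncard + 1)).2 y hy
  have h2 := hgb y
  omega

lemma Eseq_mono (T Ds : Set (Concept C R × Concept C R)) {m n : ℕ} (h : m ≤ n) :
    EseqSem T Ds n ⊆ EseqSem T Ds m := by
  induction h with
  | refl => exact subset_rfl
  | step h ih => exact fun p hp => ih hp.1

lemma Eseq_subset (T Ds : Set (Concept C R × Concept C R)) (n : ℕ) :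
    EseqSem T Ds n ⊆ Ds :=
  Eseq_mono T Ds (Nat.zero_le n)

lemma Eseq_fix (T Ds : Set (Concept C R × Concept C R)) (hDs : Ds.Finite) :
    ∃ N, EseqSem T Ds (N + 1) = EseqSem T Ds N := by
  by_contra h
  push_neg at h
  have hlt : ∀ N, (EseqSem T Ds (N + 1)).ncard < (EseqSem T Ds N).ncard := fun N =>
    Set.ncard_lt_ncard (HasSubset.Subset.ssubset_of_ne
      (show EseqSem T Ds (N+1) ⊆ EseqSem T Ds N from fun p hp => hp.1) (h N))
      (hDs.subset (Eseq_subset T Ds N))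
  have hle : ∀ N, (EseqSem T Ds N).ncard + N ≤ (EseqSem T Ds 0).ncard := by
    intro N
    induction N with
    | zero => omega
    | succ N ih => have := hlt N; omega
  have h1 := hle (Ds.ncard + 1)
  have h0 : (EseqSem T Ds 0).ncard = Ds.ncard := rfl
  omega

end AuxProof2


section AuxProof3

variable {C R : Type}

/-- Disjoint union of a family of classical interpretations. -/
def sumInterp {ι : Type} {Dom : ι → Type} (Is : ∀ i, ClassInterp C R (Dom i)) :
    ClassInterp C R (Σ i, Dom i) where
  interpC a := {u | u.2 ∈ (Is u.1).interpC a}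
  interpR r u v := ∃ (i : ι) (y z : Dom i), u = ⟨i, y⟩ ∧ v = ⟨i, z⟩ ∧ (Is i).interpR r y z

lemma sumInterp_eval {ι : Type} {Dom : ι → Type} (Is : ∀ i, ClassInterp C R (Dom i))
    (d : Concept C R) :
    (sumInterp Is).eval d = {u | u.2 ∈ (Is u.1).eval d} := by
  induction d with
  | top => ext u; simp [ClassInterp.eval]
  | bot => ext u; simp [ClassInterp.eval]
  | atom a => rfl
  | neg c ih => ext u; simp [ClassInterp.eval, ih]
  | conj c d ihc ihd => ext u; simp [ClassInterp.eval, ihc, ihd]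
  | disj c d ihc ihd => ext u; simp [ClassInterp.eval, ihc, ihd]
  | ex r c ih =>
    ext ⟨i, y⟩
    simp only [ClassInterp.eval, Set.mem_setOf_eq, ih]
    constructor
    · rintro ⟨v, ⟨j, y', z, h1, h2, hr⟩, hv⟩
      obtain ⟨rfl, hy⟩ := Sigma.mk.inj_iff.mp h1
      have hy' := eq_of_heq hy
      subst hy'
      subst h2
      exact ⟨z, hr, hv⟩
    · rintro ⟨z, hr, hz⟩
      exact ⟨⟨i, z⟩, ⟨i, y, z, rfl, rfl, hr⟩, hz⟩
  | all r c ih =>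
    ext ⟨i, y⟩
    simp only [ClassInterp.eval, Set.mem_setOf_eq, ih]
    constructor
    · intro h z hr
      exact h ⟨i, z⟩ ⟨i, y, z, rfl, rfl, hr⟩
    · rintro h v ⟨j, y', z, h1, h2, hr⟩
      obtain ⟨rfl, hy⟩ := Sigma.mk.inj_iff.mp h1
      have hy' := eq_of_heq hy
      subst hy'
      subst h2
      exact h z hr

end AuxProof3

/-- `rank_K(c) = ∞` (i.e. `c` is exceptional at every stage of the
iterated exceptionality construction) iff `K` modularly entails `c ⊑ ⊥`. -/
theorem rank_infinite_iff_modEntails_bot {C R : Type} [Finite C] [Finite R]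
    (K : KB C R) (c : Concept C R) :
    (∀ n : ℕ, ExceptionalSem K.tbox (EseqSem K.tbox K.dbox n) c) ↔
      modEntails K (Stmt.gci c Concept.bot) := by
  constructor
  · intro H D ne P hmod hK
    obtain ⟨N, hN⟩ := Eseq_fix K.tbox K.dbox K.dbox_finite
    have hfix : ∀ p ∈ EseqSem K.tbox K.dbox N,
        ExceptionalSem K.tbox (EseqSem K.tbox K.dbox N) p.1 := by
      intro p hp
      rw [← hN] at hp
      exact hp.2
    have hfin : (EseqSem K.tbox K.dbox N).Finite :=
      K.dbox_finite.subset (Eseq_subset _ _ _)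
    have hD : ∀ p ∈ EseqSem K.tbox K.dbox N, P.satDCI p.1 p.2 :=
      fun p hp => hK.2 p (Eseq_subset _ _ _ hp)
    have hempty := main_empty ne K.tbox _ hfin hfix c (H N) P hmod hK.1 hD
    show P.toClassInterp.eval c ⊆ P.toClassInterp.eval Concept.bot
    rw [hempty]
    exact fun x hx => hx
  · intro Hmod n
    by_contra hex
    unfold ExceptionalSem modEntailsFrom at hex
    push_neg at hex
    obtain ⟨D0, ne0, P0, hm0, hT0, hD0, hns⟩ := hex
    -- witness for c
    have hx0 : ∃ x : D0, x ∈ P0.toClassInterp.eval c := by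
      unfold PrefInterp.satStmt PrefInterp.satDCI at hns
      rw [Set.not_subset] at hns
      obtain ⟨x, hx1, hx2⟩ := hns
      refine ⟨x, ?_⟩
      simpa [ClassInterp.eval] using hx2
    obtain ⟨x0, hx0c⟩ := hx0
    have hEn_fin : (EseqSem K.tbox K.dbox n).Finite :=
      K.dbox_finite.subset (Eseq_subset _ _ _)
    obtain ⟨g0, hg0b, -, hg0D⟩ := norm_heights _ hEn_fin P0 hm0 hD0
    classical
    set B := K.dbox.ncard with hBdef
    -- witness models for removed DCIs
    have hpack : ∀ p : {p // p ∈ K.dbox ∧ p ∉ EseqSem K.tbox K.dbox n},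
        ∃ (m : ℕ) (Dp : Type) (Ip : ClassInterp C R Dp) (gp : Dp → ℕ) (xp : Dp),
          m < n ∧ p.1 ∈ EseqSem K.tbox K.dbox m ∧ (∀ y, gp y ≤ B) ∧ gp xp = 0 ∧
          xp ∈ Ip.eval p.1.1 ∧
          (∀ q ∈ K.tbox, (heightInterp Ip gp).satGCI q.1 q.2) ∧
          (∀ q ∈ EseqSem K.tbox K.dbox m, (heightInterp Ip gp).satDCI q.1 q.2) := by
      rintro ⟨p, hp, hpn⟩
      have hex' : ∃ m, p ∉ EseqSem K.tbox K.dbox (m + 1) := by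
        cases n with
        | zero => exact absurd hp hpn
        | succ n' => exact ⟨n', hpn⟩
      have hfind := Nat.find_spec hex'
      have hmem : p ∈ EseqSem K.tbox K.dbox (Nat.find hex') := by
        rcases Nat.eq_zero_or_pos (Nat.find hex') with h0 | h0
        · rw [h0]; exact hp
        · obtain ⟨k, hk⟩ := Nat.exists_eq_succ_of_ne_zero h0.ne'
          have hmin := Nat.find_min hex' (show k < Nat.find hex' by omega)
          rw [hk]
          exact not_not.mp hmin
      have hnexc : ¬ ExceptionalSem K.tbox (EseqSem K.tbox K.dbox (Nat.find hex')) p.1 :=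
        fun hexc => hfind ⟨hmem, hexc⟩
      have hmn : Nat.find hex' < n := by
        cases n with
        | zero => exact absurd hp hpn
        | succ n' => exact Nat.lt_succ_of_le (Nat.find_le hpn)
      unfold ExceptionalSem modEntailsFrom at hnexc
      push_neg at hnexc
      obtain ⟨Dp, nep, Pp, hmp, hTp, hDp, hnsp⟩ := hnexc
      unfold PrefInterp.satStmt PrefInterp.satDCI at hnsp
      rw [Set.not_subset] at hnsp
      obtain ⟨xp, hxp1, hxp2⟩ := hnsp
      have hxp2' : xp ∈ Pp.toClassInterp.eval p.1 := by
        simpa [ClassInterp.eval] using hxp2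
      have hfinm : (EseqSem K.tbox K.dbox (Nat.find hex')).Finite :=
        K.dbox_finite.subset (Eseq_subset _ _ _)
      obtain ⟨gp, hgpb, hgp0, hgpD⟩ := norm_heights _ hfinm Pp hmp hDp
      refine ⟨Nat.find hex', Dp, Pp.toClassInterp, gp, xp, hmn, hmem,
        fun y => le_trans (hgpb y) (Set.ncard_le_ncard (Eseq_subset _ _ _) K.dbox_finite),
        hgp0 xp ?_, hxp2', fun q hq => hTp q hq, hgpD⟩
      exact ⟨Set.mem_univ xp, fun z _ h => hxp1.2 z (Set.mem_univ z) h⟩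
    choose stg DomF IsF gF xF hstage_lt hstage_mem hgF_le hgF0 hxF hTF hDF using hpack
    -- the combined model
    let ι := {p // p ∈ K.dbox ∧ p ∉ EseqSem K.tbox K.dbox n}
    let Dom' : ι ⊕ Unit → Type := Sum.elim DomF (fun _ => D0)
    let Is' : ∀ i, ClassInterp C R (Dom' i) := fun i =>
      match i with
      | .inl p => IsF p
      | .inr _ => P0.toClassInterp
    let gs' : ∀ i, Dom' i → ℕ := fun i =>
      match i with
      | .inl p => gF p
      | .inr _ => g0
    let st : ι ⊕ Unit → ℕ := Sum.elim stg (fun _ => n)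
    let G : (Σ i, Dom' i) → ℕ := fun u => st u.1 * (B + 1) + gs' u.1 u.2
    let Q : PrefInterp C R (Σ i, Dom' i) := heightInterp (sumInterp Is') G
    have hmodQ : Modular Q.pref := heightInterp_modular _ _
    have hne : Nonempty (Σ i, Dom' i) := ⟨⟨Sum.inr (), x0⟩⟩
    have hst_le_n : ∀ i : ι ⊕ Unit, st i ≤ n := by
      intro i
      cases i with
      | inl p => exact le_of_lt (hstage_lt p)
      | inr _ => exact le_rfl
    have hTQ : ∀ q ∈ K.tbox, Q.satGCI q.1 q.2 := by
      rintro q hq ⟨i, y⟩ hu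
      have hu' : (⟨i, y⟩ : Σ i, Dom' i) ∈ (sumInterp Is').eval q.1 := hu
      rw [sumInterp_eval] at hu'
      show (⟨i, y⟩ : Σ i, Dom' i) ∈ (sumInterp Is').eval q.2
      rw [sumInterp_eval]
      cases i with
      | inl p => exact hTF p q hq hu'
      | inr _ => exact hT0 q hq hu'
    have hDcomp : ∀ i : ι ⊕ Unit, ∀ q ∈ EseqSem K.tbox K.dbox (st i),
        (heightInterp (Is' i) (gs' i)).satDCI q.1 q.2 := by
      intro i
      cases i with
      | inl p => exact hDF p
      | inr _ => exact hg0D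
    have hDQ : ∀ q ∈ K.dbox, Q.satDCI q.1 q.2 := by
      rintro ⟨l, r⟩ hq u hu
      obtain ⟨hu1, hu2⟩ := hu
      have hul : u ∈ (sumInterp Is').eval l := hu1
      rw [sumInterp_eval] at hul
      have humin : ∀ v : Σ i, Dom' i, v.2 ∈ (Is' v.1).eval l → G u ≤ G v := by
        intro v hv
        by_contra hlt
        have hv' : v ∈ (sumInterp Is').eval l := by
          rw [sumInterp_eval]; exact hv
        exact hu2 v hv' (show G v < G u by omega)
      have hlr_mem : (⟨l, r⟩ : Concept C R × Concept C R)
          ∈ EseqSem K.tbox K.dbox (st u.1) := by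
        by_cases hn : (⟨l, r⟩ : Concept C R × Concept C R) ∈ EseqSem K.tbox K.dbox n
        · exact Eseq_mono _ _ (hst_le_n u.1) hn
        · have hwit := humin ⟨Sum.inl ⟨⟨l, r⟩, hq, hn⟩, xF ⟨⟨l, r⟩, hq, hn⟩⟩
            (hxF ⟨⟨l, r⟩, hq, hn⟩)
          have hGw : G ⟨Sum.inl ⟨⟨l, r⟩, hq, hn⟩, xF ⟨⟨l, r⟩, hq, hn⟩⟩
              = stg ⟨⟨l, r⟩, hq, hn⟩ * (B + 1) := by
            show stg ⟨⟨l, r⟩, hq, hn⟩ * (B + 1) + gF ⟨⟨l, r⟩, hq, hn⟩ (xF ⟨⟨l, r⟩, hq, hn⟩)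
              = stg ⟨⟨l, r⟩, hq, hn⟩ * (B + 1)
            rw [hgF0 ⟨⟨l, r⟩, hq, hn⟩, Nat.add_zero]

          rw [hGw] at hwit
          have h1 : st u.1 * (B + 1) ≤ stg ⟨⟨l, r⟩, hq, hn⟩ * (B + 1) :=
            le_trans (Nat.le_add_right _ _) hwit
          have hstle : st u.1 ≤ stg ⟨⟨l, r⟩, hq, hn⟩ :=
            Nat.le_of_mul_le_mul_right h1 (Nat.succ_pos B)
          exact Eseq_mono _ _ hstle (hstage_mem ⟨⟨l, r⟩, hq, hn⟩)
      have humin' : u.2 ∈ minSet (heightInterp (Is' u.1) (gs' u.1)).pref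
          ((Is' u.1).eval l) := by
        refine ⟨hul, fun z hz hlt => ?_⟩
        have hlt' : gs' u.1 z < gs' u.1 u.2 := hlt
        have h2 : st u.1 * (B + 1) + gs' u.1 u.2 ≤ st u.1 * (B + 1) + gs' u.1 z :=
          humin ⟨u.1, z⟩ hz
        omega
      have hur : u.2 ∈ (Is' u.1).eval r := hDcomp u.1 ⟨l, r⟩ hlr_mem humin'
      show u ∈ (sumInterp Is').eval r
      rw [sumInterp_eval]
      exact hur
    have hQ := Hmod (Σ i, Dom' i) hne Q hmodQ ⟨hTQ, hDQ⟩
    have hx : (⟨Sum.inr (), x0⟩ : Σ i, Dom' i) ∈ (sumInterp Is').eval c := by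
      rw [sumInterp_eval]
      exact hx0c
    exact hQ hx

end DefeasibleDL
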